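/- Let r ≥ 2 be a natural number. Define e : ℕ → ℕ by: e(4) = min(2, r); e(5) = 1; and for k ≥ 6: if r is even and k = 3r − 1 then e(k) = r, otherwise e(k) = min(2⌊k/6⌋ + 3, r) when k ≡ 4 (mod 6) and e(k) = min(2⌊k/6⌋ + 1, r) when k ≢ 4 (mod 6). Then (r − 2) + Σ_{k=4}^{3r} (r − e(k)) equals (r−1)(3r−5)/2 if r is odd, and ((r−1)(3r−5) + 1)/2 if r is even. -/

import Mathlib

/-- The elimination count `e(k)` for a generic plane curve with `r` branches,
each with value semigroup `⟨2,3⟩` and pairwise intersection multiplicities `6`: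
`e(4) = min(2,r)`, `e(5) = 1`, and for `k ≥ 6`: `e(k) = r` if `r` is even and
`k = 3r − 1`; otherwise `e(k) = min(2⌊k/6⌋+3, r)` if `k ≡ 4 (mod 6)` and
`e(k) = min(2⌊k/6⌋+1, r)` if `k ≢ 4 (mod 6)`. -/
def e23 (r k : ℕ) : ℕ :=
  if k = 4 then min 2 r
  else if k = 5 then 1
  else if Even r ∧ k = 3 * r - 1 then r
  else if k % 6 = 4 then min (2 * (k / 6) + 3) r
  else min (2 * (k / 6) + 1) r

/-- auxiliary: the "unrestricted" coefficient threshold -/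
def tt (k : ℕ) : ℕ :=
  if k = 4 then 2
  else if k = 5 then 1
  else if k % 6 = 4 then 2 * (k / 6) + 3
  else 2 * (k / 6) + 1

open Finset in
lemma stepU (r : ℕ) :
    ∑ k ∈ Icc 4 (6*(r+1)+5), ((r+1) - tt k)
      = (∑ k ∈ Icc 4 (6*r+5), (r - tt k))
        + (∑ k ∈ Icc 4 (6*r+5), if tt k ≤ r then 1 else 0) := by
  simp only [← Finset.Ico_add_one_right_eq_Icc]
  rw [← Finset.sum_Ico_consecutive (fun k => (r+1) - tt k)
        (show 4 ≤ 6*r+5+1 by omega) (show 6*r+5+1 ≤ 6*(r+1)+5+1 by omega)]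
  have h0 : ∑ k ∈ Ico (6*r+5+1) (6*(r+1)+5+1), ((r+1) - tt k) = 0 := by
    apply Finset.sum_eq_zero
    intro k hk
    rw [Finset.mem_Ico] at hk
    simp only [tt]
    split_ifs <;> omega
  rw [h0, add_zero, ← Finset.sum_add_distrib]
  apply Finset.sum_congr rfl
  intro k hk
  split_ifs <;> omega

open Finset in
lemma stepV (r : ℕ) (hr : 3 ≤ r) :
    ∑ k ∈ Icc 4 (6*(r+1)+5), (if tt k ≤ r+1 then 1 else 0)
      = (∑ k ∈ Icc 4 (6*r+5), if tt k ≤ r then 1 else 0)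
        + (if r % 2 = 0 then 6 else 0) := by
  simp only [← Finset.Ico_add_one_right_eq_Icc]
  rw [← Finset.sum_Ico_consecutive (fun k => if tt k ≤ r+1 then 1 else 0)
        (show 4 ≤ 6*r+5+1 by omega) (show 6*r+5+1 ≤ 6*(r+1)+5+1 by omega)]
  have h0 : ∑ k ∈ Ico (6*r+5+1) (6*(r+1)+5+1), (if tt k ≤ r+1 then (1:ℕ) else 0) = 0 := by
    apply Finset.sum_eq_zero
    intro k hk
    rw [Finset.mem_Ico] at hk
    simp only [tt]
    split_ifs <;> omega
  rw [h0, add_zero]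
  have key : ∑ k ∈ Ico 4 (6*r+5+1), (if tt k ≤ r+1 then (1:ℕ) else 0)
      = (∑ k ∈ Ico 4 (6*r+5+1), if tt k ≤ r then (1:ℕ) else 0)
        + (∑ k ∈ Ico 4 (6*r+5+1), if tt k = r+1 then (1:ℕ) else 0) := by
    rw [← Finset.sum_add_distrib]
    apply Finset.sum_congr rfl
    intro k hk
    split_ifs <;> omega
  rw [key]
  congr 1
  rcases Nat.even_or_odd r with he | ho
  · rw [Nat.even_iff] at he
    rw [if_pos he]
    have hfilter : (Ico 4 (6*r+5+1)).filter (fun k => tt k = r+1)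
        = ({3*r-2, 3*r, 3*r+1, 3*r+2, 3*r+3, 3*r+5} : Finset ℕ) := by
      ext k
      rw [Finset.mem_filter]
      simp only [Finset.mem_filter, Finset.mem_Ico, Finset.mem_insert,
        Finset.mem_singleton, tt]
      split_ifs <;> omega
    rw [Finset.sum_boole, hfilter]
    rw [show ({3*r-2, 3*r, 3*r+1, 3*r+2, 3*r+3, 3*r+5} : Finset ℕ).card = 6 by
      rw [Finset.card_insert_of_notMem (by simp only [Finset.mem_insert, Finset.mem_singleton]; omega),
          Finset.card_insert_of_notMem (by simp only [Finset.mem_insert, Finset.mem_singleton]; omega),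
          Finset.card_insert_of_notMem (by simp only [Finset.mem_insert, Finset.mem_singleton]; omega),
          Finset.card_insert_of_notMem (by simp only [Finset.mem_insert, Finset.mem_singleton]; omega),
          Finset.card_insert_of_notMem (by simp only [Finset.mem_insert, Finset.mem_singleton]; omega),
          Finset.card_singleton]]
    norm_num
  · rw [Nat.odd_iff] at ho
    rw [if_neg (by omega)]
    apply Finset.sum_eq_zero
    intro k hk
    rw [Finset.mem_Ico] at hk
    simp only [tt]
    split_ifs <;> omega

open Finset in
lemma keylem (m : ℕ) (hm : 1 ≤ m) :
    ((∑ k ∈ Icc 4 (6*(2*m+1)+5), ((2*m+1) - tt k)) + 4*m = 6*(m*m) + 1)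
    ∧ ((∑ k ∈ Icc 4 (6*(2*m+1)+5), (if tt k ≤ 2*m+1 then (1:ℕ) else 0)) = 6*m + 1)
    ∧ ((∑ k ∈ Icc 4 (6*(2*m+2)+5), ((2*m+2) - tt k)) = 6*(m*m) + 2*m + 2)
    ∧ ((∑ k ∈ Icc 4 (6*(2*m+2)+5), (if tt k ≤ 2*m+2 then (1:ℕ) else 0)) = 6*m + 1) := by
  induction m with
  | zero => omega
  | succ n ih =>
    rcases Nat.eq_or_lt_of_le hm with h1 | h1
    · -- n = 0, base case m = 1
      have hn : n = 0 := by omega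
      subst hn
      refine ⟨?_, ?_, ?_, ?_⟩ <;> decide
    · have hn : 1 ≤ n := by omega
      obtain ⟨hU1, hV1, hU2, hV2⟩ := ih hn
      -- from r = 2n+2 step to r = 2n+3 = 2(n+1)+1
      have e1 : 6*(2*n+2)+5 = 6*((2*n+1)+1)+5 := by ring
      have e2 : 6*(2*(n+1)+1)+5 = 6*((2*n+2)+1)+5 := by ring
      have e3 : 6*(2*(n+1)+2)+5 = 6*((2*(n+1)+1)+1)+5 := by ring
      have e4 : (2*(n+1)+1) = (2*n+2)+1 := by ring
      have e5 : (2*(n+1)+2) = (2*(n+1)+1)+1 := by ring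
      have hU3 : ∑ k ∈ Icc 4 (6*(2*(n+1)+1)+5), ((2*(n+1)+1) - tt k)
          = (6*(n*n)+2*n+2) + (6*n+1) := by
        rw [e2, e4, stepU (2*n+2), hU2, hV2]
      have hV3 : ∑ k ∈ Icc 4 (6*(2*(n+1)+1)+5), (if tt k ≤ 2*(n+1)+1 then (1:ℕ) else 0)
          = 6*(n+1) + 1 := by
        rw [e2, e4, stepV (2*n+2) (by omega), hV2, if_pos (by omega : (2*n+2) % 2 = 0)]
        omega
      have hU4 : ∑ k ∈ Icc 4 (6*(2*(n+1)+2)+5), ((2*(n+1)+2) - tt k)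
          = ((6*(n*n)+2*n+2) + (6*n+1)) + (6*(n+1)+1) := by
        rw [e3, e5, stepU (2*(n+1)+1), hU3, hV3]
      have hV4 : ∑ k ∈ Icc 4 (6*(2*(n+1)+2)+5), (if tt k ≤ 2*(n+1)+2 then (1:ℕ) else 0)
          = 6*(n+1) + 1 := by
        rw [e3, e5, stepV (2*(n+1)+1) (by omega), hV3]
        rw [if_neg (by omega), add_zero]
      have hsq : (n+1)*(n+1) = n*n + 2*n + 1 := by ring
      refine ⟨?_, hV3, ?_, hV4⟩
      · rw [hU3, hsq]; omega
      · rw [hU4, hsq]; omega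

open Finset in
lemma bridge (r : ℕ) (hr : 3 ≤ r) :
    (∑ k ∈ Icc 4 (3*r), (r - e23 r k)) + (if r % 2 = 0 then 1 else 0)
      = ∑ k ∈ Icc 4 (6*r+5), (r - tt k) := by
  simp only [← Finset.Ico_add_one_right_eq_Icc]
  rw [← Finset.sum_Ico_consecutive (fun k => r - tt k)
        (show 4 ≤ 3*r+1 by omega) (show 3*r+1 ≤ 6*r+5+1 by omega)]
  have h0 : ∑ k ∈ Ico (3*r+1) (6*r+5+1), (r - tt k) = 0 := by
    apply Finset.sum_eq_zero
    intro k hk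
    rw [Finset.mem_Ico] at hk
    simp only [tt]
    split_ifs <;> omega
  rw [h0, add_zero]
  rcases Nat.even_or_odd r with he | ho
  · rw [Nat.even_iff] at he
    rw [if_pos he]
    have hmem : 3*r-1 ∈ Ico 4 (3*r+1) := by rw [Finset.mem_Ico]; omega
    rw [← Finset.add_sum_erase _ (fun k => r - e23 r k) hmem,
        ← Finset.add_sum_erase _ (fun k => r - tt k) hmem]
    have hA : r - e23 r (3*r-1) = 0 := by
      simp only [e23, Nat.even_iff, and_true]
      split_ifs <;> omega
    have hB : r - tt (3*r-1) = 1 := by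
      simp only [tt]
      split_ifs <;> omega
    rw [hA, hB]
    have hrest : ∑ k ∈ (Ico 4 (3*r+1)).erase (3*r-1), (r - e23 r k)
        = ∑ k ∈ (Ico 4 (3*r+1)).erase (3*r-1), (r - tt k) := by
      apply Finset.sum_congr rfl
      intro k hk
      rw [Finset.mem_erase, Finset.mem_Ico] at hk
      simp only [e23, tt, Nat.even_iff]
      split_ifs <;> omega
    rw [hrest]
    ring
  · rw [Nat.odd_iff] at ho
    rw [if_neg (by omega), add_zero]
    apply Finset.sum_congr rfl
    intro k hk
    rw [Finset.mem_Ico] at hk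
    simp only [e23, tt, Nat.even_iff]
    split_ifs <;> omega

/-- Dimension of the generic component of the moduli space `M_r(2,3)`:
`(r−2) + Σ_{k=4}^{3r} (r − e(k))` equals `(r−1)(3r−5)/2` for `r` odd and
`((r−1)(3r−5)+1)/2` for `r` even. -/
theorem dim_moduli_two_three (r : ℕ) (hr : 2 ≤ r) :
    (r - 2) + ∑ k ∈ Finset.Icc 4 (3 * r), (r - e23 r k) =
      if Odd r then (r - 1) * (3 * r - 5) / 2
      else ((r - 1) * (3 * r - 5) + 1) / 2 := by
  rcases Nat.eq_or_lt_of_le hr with h2 | h3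
  · subst h2; decide
  · have hr3 : 3 ≤ r := h3
    rcases Nat.even_or_odd r with he | ho
    · -- r = 2m+2, m ≥ 1
      rw [Nat.even_iff] at he
      obtain ⟨m, hm, rfl⟩ : ∃ m, 1 ≤ m ∧ r = 2*m+2 := ⟨(r-2)/2, by omega, by omega⟩
      obtain ⟨-, -, hU, -⟩ := keylem m hm
      have hb := bridge (2*m+2) (by omega)
      rw [if_pos (by omega : (2*m+2) % 2 = 0), hU] at hb
      rw [if_neg (by rw [Nat.odd_iff]; omega)]
      have h1 : 2*m+2-1 = 2*m+1 := by omega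
      have h2 : 3*(2*m+2)-5 = 6*m+1 := by omega
      have h3 : 2*m+2-2 = 2*m := by omega
      rw [h1, h2, h3]
      have h4 : (2*m+1)*(6*m+1)+1 = 2*(6*(m*m)+4*m+1) := by ring
      rw [h4, Nat.mul_div_cancel_left _ (by norm_num : (0:ℕ) < 2)]
      omega
    · -- r = 2m+1, m ≥ 1
      rw [Nat.odd_iff] at ho
      obtain ⟨m, hm, rfl⟩ : ∃ m, 1 ≤ m ∧ r = 2*m+1 := ⟨(r-1)/2, by omega, by omega⟩
      obtain ⟨hU, -, -, -⟩ := keylem m hm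
      have hb := bridge (2*m+1) (by omega)
      rw [if_neg (by omega : ¬ (2*m+1) % 2 = 0), add_zero] at hb
      rw [if_pos (by rw [Nat.odd_iff]; omega)]
      have h1 : 2*m+1-1 = 2*m := by omega
      have h2 : 3*(2*m+1)-5 = 6*m-2 := by omega
      have h3 : 2*m+1-2 = 2*m-1 := by omega
      rw [h1, h2, h3]
      obtain ⟨j, rfl⟩ : ∃ j, m = j+1 := ⟨m-1, by omega⟩
      have h4 : 6*(j+1)-2 = 6*j+4 := by omega
      have h5 : 2*(j+1)-1 = 2*j+1 := by omega
      rw [h4, h5]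
      have h6 : 2*(j+1)*(6*j+4) = 2*(6*(j*j)+10*j+4) := by ring
      rw [h6, Nat.mul_div_cancel_left _ (by norm_num : (0:ℕ) < 2)]
      have h7 : (j+1)*(j+1) = j*j+2*j+1 := by ring
      rw [h7] at hU
      omega
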